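/- arXiv:2401.04072 — 2 statements merged into one kernel-verified Lean document; each statement's English description precedes it below -/
import Mathlib

section
/- Let E be a number field equipped with a ℚ-linear field involution α ↦ ᾱ (possibly the identity). Let (U,q) be a nondegenerate quadratic form over ℚ, and suppose that U carries a structure of E-vector space compatible with its ℚ-vector space structure. Then the following are equivalent: (1) q(αx, y) = q(x, ᾱy) for all x, y ∈ U and all α ∈ E; (2) there exists a nondegenerate sesquilinear form h : U × U → E satisfying h(y,x) = conjugate of h(x,y) for all x,y (i.e., h is hermitian with respect to the involution) such that q(x,y) = Tr_{E/ℚ}(h(x,y)) for all x, y ∈ U. -/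
noncomputable section

open scoped Classical TensorProduct

/-- A nondegenerate symmetric bilinear form (a "quadratic form"), given as a bare
function `B : V → V → k`. -/
def IsSymmQF (k : Type*) [Field k] {V : Type*} [AddCommGroup V] [Module k V]
    (B : V → V → k) : Prop :=
  (∀ x y z : V, B (x + y) z = B x z + B y z) ∧
  (∀ (a : k) (x y : V), B (a • x) y = a * B x y) ∧
  (∀ x y : V, B x y = B y x) ∧
  (∀ x : V, (∀ y : V, B x y = 0) → x = 0)

/-- A nondegenerate hermitian (sesquilinear) form over `E` with respect to the
involution `c` (linear in the first variable). -/
def IsHermitianForm {E : Type*} [Field E] (c : E ≃+* E) {W : Type*} [AddCommGroup W]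
    [Module E W] (Q : W → W → E) : Prop :=
  (∀ x y z : W, Q (x + y) z = Q x z + Q y z) ∧
  (∀ (a : E) (x y : W), Q (a • x) y = a * Q x y) ∧
  (∀ x y : W, Q y x = c (Q x y)) ∧
  (∀ x : W, (∀ y : W, Q x y = 0) → x = 0)

/-- The transfer to `ℚ` of an `E`-valued form: `(x, y) ↦ Tr_{E/ℚ} (Q x y)`. -/
def transfer (E : Type*) [Field E] [Algebra ℚ E] {W : Type*} (Q : W → W → E) :
    W → W → ℚ :=
  fun x y => Algebra.trace ℚ E (Q x y)

/-- Isometry of two forms over `k`. -/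
def IsometricForms (k : Type*) [Field k] {V₁ V₂ : Type*} [AddCommGroup V₁] [Module k V₁]
    [AddCommGroup V₂] [Module k V₂] (B₁ : V₁ → V₁ → k) (B₂ : V₂ → V₂ → k) : Prop :=
  ∃ f : V₁ ≃ₗ[k] V₂, ∀ x y : V₁, B₂ (f x) (f y) = B₁ x y

/-- Orthogonal direct sum of two forms. -/
def orthSum {k V₁ V₂ : Type*} [Add k] (B₁ : V₁ → V₁ → k) (B₂ : V₂ → V₂ → k) :
    V₁ × V₂ → V₁ × V₂ → k :=
  fun x y => B₁ x.1 y.1 + B₂ x.2 y.2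

/-- The form `B` over `ℚ` has signature `(p, q)`, witnessed by an orthogonal basis with
`p` positive and `q` negative diagonal entries.  (For a nondegenerate symmetric bilinear
form over `ℚ` this is exactly the signature of `B ⊗ ℝ`.) -/
def HasSignature {V : Type*} [AddCommGroup V] [Module ℚ V] (B : V → V → ℚ)
    (p q : ℕ) : Prop :=
  ∃ b : Module.Basis (Fin (p + q)) ℚ V,
    (∀ i j, i ≠ j → B (b i) (b j) = 0) ∧
    (Finset.univ.filter fun i => 0 < B (b i) (b i)).card = p ∧
    (Finset.univ.filter fun i => B (b i) (b i) < 0).card = q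

/-- The real form `W_σ`, obtained from the `E`-valued form `Q` by extension of scalars
along the real embedding `σ : E →+* ℝ`, has signature `(p, q)`. -/
def HasSignatureAt {E : Type*} [Field E] {W : Type*} [AddCommGroup W] [Module E W]
    (σ : E →+* ℝ) (Q : W → W → E) (p q : ℕ) : Prop :=
  ∃ b : Module.Basis (Fin (p + q)) E W,
    (∀ i j, i ≠ j → Q (b i) (b j) = 0) ∧
    (Finset.univ.filter fun i => 0 < σ (Q (b i) (b i))).card = p ∧
    (Finset.univ.filter fun i => σ (Q (b i) (b i)) < 0).card = q

/-- `a` is a representative of the determinant of `B` in `k^×/k^{×2}`. -/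
def DetRep (k : Type*) [Field k] {V : Type*} [AddCommGroup V] [Module k V]
    (B : V → V → k) (a : k) : Prop :=
  ∃ (n : ℕ) (b : Module.Basis (Fin n) k V) (c : k),
    (∀ i j, i ≠ j → B (b i) (b j) = 0) ∧ c ≠ 0 ∧ (∏ i, B (b i) (b i)) = a * c ^ 2

/-- The hyperbolic plane over `k`. -/
def hypForm (k : Type*) [Field k] : k × k → k × k → k :=
  fun x y => x.1 * y.2 + x.2 * y.1

/-- Orthogonal sum of `a` copies of the hyperbolic plane over `k`. -/
def hypSum (k : Type*) [Field k] (a : ℕ) : (Fin a → k × k) → (Fin a → k × k) → k :=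
  fun x y => ∑ i, hypForm k (x i) (y i)

/-- The diagonal form `⟨d 0, …, d (n-1)⟩` over `k`. -/
def diagForm (k : Type*) [Field k] {n : ℕ} (d : Fin n → k) :
    (Fin n → k) → (Fin n → k) → k :=
  fun x y => ∑ i, d i * x i * y i

/-- The one-dimensional form `⟨h⟩` on `k`. -/
def scalForm {k : Type*} [Field k] (h : k) : k → k → k := fun x y => h * x * y

/-- The form `H³` (orthogonal sum of three hyperbolic planes) over `ℚ`. -/
def H3Form : ((ℚ × ℚ) × (ℚ × ℚ) × (ℚ × ℚ)) → ((ℚ × ℚ) × (ℚ × ℚ) × (ℚ × ℚ)) → ℚ :=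
  orthSum (hypForm ℚ) (orthSum (hypForm ℚ) (hypForm ℚ))

/-- The quadratic form `V_K3 = H³ ⊕ I₁₆` over `ℚ`. -/
def VK3Form : (((ℚ × ℚ) × (ℚ × ℚ) × (ℚ × ℚ)) × (Fin 16 → ℚ)) →
    (((ℚ × ℚ) × (ℚ × ℚ) × (ℚ × ℚ)) × (Fin 16 → ℚ)) → ℚ :=
  orthSum H3Form (diagForm ℚ fun _ => (-1 : ℚ))

/-- The field `E` is totally real. -/
def TotallyReal (E : Type*) [Field E] : Prop :=
  ∀ (φ : E →+* ℂ) (x : E), (φ x).im = 0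

/-- A totally positive element of a number field. -/
def TotallyPositive {E : Type*} [Field E] (α : E) : Prop :=
  ∀ σ : E →+* ℝ, 0 < σ α

/-- `E` is a CM field, with complex conjugation `c`: `c` is a nontrivial automorphism
which corresponds to complex conjugation under every complex embedding. -/
def IsCMWithConj (E : Type*) [Field E] [NumberField E] (c : E ≃+* E) : Prop :=
  c ≠ RingEquiv.refl E ∧ ∀ (φ : E →+* ℂ) (x : E), φ (c x) = starRingEnd ℂ (φ x)

/-- `p ∈ S_E`: the prime `p` is such that `E ⊗_ℚ ℚ_p ≅ (E₀ ⊗_ℚ ℚ_p) × (E₀ ⊗_ℚ ℚ_p)`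
as `ℚ_p`-algebras. -/
def MemSE (E : Type*) [Field E] [NumberField E] (E₀ : Type*) [Field E₀] [NumberField E₀]
    (p : ℕ) [Fact p.Prime] : Prop :=
  Nonempty ((ℚ_[p] ⊗[ℚ] E) ≃ₐ[ℚ_[p]] ((ℚ_[p] ⊗[ℚ] E₀) × (ℚ_[p] ⊗[ℚ] E₀)))

/-- Orthogonal sum of `n` copies of a form. -/
def nCopies {k V : Type*} [Field k] (n : ℕ) (B : V → V → k) :
    (Fin n → V) → (Fin n → V) → k :=
  fun x y => ∑ i, B (x i) (y i)

/-- Witt equivalence of two forms over `k`. -/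
def WittEquiv (k : Type*) [Field k] {V₁ V₂ : Type*} [AddCommGroup V₁] [Module k V₁]
    [AddCommGroup V₂] [Module k V₂] (B₁ : V₁ → V₁ → k) (B₂ : V₂ → V₂ → k) : Prop :=
  ∃ a b : ℕ, IsometricForms k (orthSum B₁ (hypSum k a)) (orthSum B₂ (hypSum k b))

/-- The Witt class of `B` is torsion: some number `n ≥ 1` of orthogonal copies of `B`
is isometric to a sum of hyperbolic planes. -/
def WittTorsion (k : Type*) [Field k] {V : Type*} [AddCommGroup V] [Module k V]
    (B : V → V → k) : Prop :=
  ∃ n : ℕ, 1 ≤ n ∧ ∃ a : ℕ, IsometricForms k (nCopies n B) (hypSum k a)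

/-- `B ⊗_ℚ ℚ_p` is isometric to the orthogonal sum of `N` hyperbolic planes: the Gram
matrix of `B` in some (any) basis, viewed over `ℚ_p`, gives a form isometric to `H^N`. -/
def PadicHyperbolic (p : ℕ) [Fact p.Prime] {V : Type*} [AddCommGroup V] [Module ℚ V]
    (B : V → V → ℚ) (N : ℕ) : Prop :=
  ∃ b : Module.Basis (Fin (2 * N)) ℚ V,
    IsometricForms ℚ_[p]
      (fun x y : Fin (2 * N) → ℚ_[p] => ∑ i, ∑ j, ((B (b i) (b j) : ℚ) : ℚ_[p]) * x i * y j)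
      (hypSum ℚ_[p] N)

/-- The Hilbert symbol `(a, b)_p` vanishes: `z² = a x² + b y²` has a nonzero solution
over `ℚ_p`. -/
def HilbertVanishes (p : ℕ) [Fact p.Prime] (a b : ℚ) : Prop :=
  ∃ x y z : ℚ_[p], ¬(x = 0 ∧ y = 0 ∧ z = 0) ∧
    z ^ 2 = (a : ℚ_[p]) * x ^ 2 + (b : ℚ_[p]) * y ^ 2

/-- the transfer lemma. -/
theorem statement_1
    {E : Type*} [Field E] [NumberField E]
    (c : E ≃+* E) (hc : ∀ x : E, c (c x) = x)
    {U : Type*} [AddCommGroup U] [Module ℚ U] [Module E U] [IsScalarTower ℚ E U]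
    [FiniteDimensional ℚ U]
    (q : U → U → ℚ) (hq : IsSymmQF ℚ q) :
    (∀ (α : E) (x y : U), q (α • x) y = q x (c α • y)) ↔
      ∃ h : U → U → E, IsHermitianForm c h ∧
        ∀ x y : U, q x y = Algebra.trace ℚ E (h x y) := by
  obtain ⟨qadd, qsmul, qsymm, qnd⟩ := hq
  have hT : (Algebra.traceForm ℚ E).Nondegenerate := traceForm_nondegenerate ℚ E
  have hcfix : ∀ (r : ℚ), c (algebraMap ℚ E r) = algebraMap ℚ E r := by
    intro r
    rw [eq_ratCast (algebraMap ℚ E) r, map_ratCast]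
  have htrc : ∀ z : E, Algebra.trace ℚ E (c z) = Algebra.trace ℚ E z := fun z =>
    Algebra.trace_eq_of_algEquiv { c with commutes' := hcfix } z
  constructor
  · intro H
    -- construct h : for each (x,y) take the element of E representing the
    -- ℚ-linear functional α ↦ q (α • x) y via the trace form.
    set F : U → U → Module.Dual ℚ E := fun x y =>
      { toFun := fun α => q (α • x) y
        map_add' := fun a b => by rw [add_smul]; exact qadd _ _ _
        map_smul' := fun r a => by
          dsimp only [RingHom.id_apply, smul_eq_mul]
          rw [smul_assoc]; exact qsmul r (a • x) y } with hF
    set h : U → U → E := fun x y =>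
      ((Algebra.traceForm ℚ E).toDual hT).symm (F x y) with hh
    have key : ∀ (x y : U) (α : E), Algebra.trace ℚ E (h x y * α) = q (α • x) y := by
      intro x y α
      have := LinearMap.BilinForm.apply_toDual_symm_apply (B := Algebra.traceForm ℚ E)
        (hB := hT) (F x y) α
      rwa [Algebra.traceForm_apply] at this
    have uniq : ∀ z z' : E,
        (∀ α : E, Algebra.trace ℚ E (z * α) = Algebra.trace ℚ E (z' * α)) → z = z' := by
      intro z z' hzz
      have h0 : ∀ α : E, Algebra.traceForm ℚ E (z - z') α = 0 := by
        intro α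
        rw [Algebra.traceForm_apply, sub_mul, map_sub, hzz α, sub_self]
      exact sub_eq_zero.mp (hT.1 _ h0)
    refine ⟨h, ⟨?_, ?_, ?_, ?_⟩, ?_⟩
    · -- additivity in the first variable
      intro x y z
      refine uniq _ _ fun α => ?_
      rw [key, add_mul, map_add, key, key, smul_add]
      exact qadd _ _ _
    · -- E-linearity in the first variable
      intro a x y
      refine uniq _ _ fun α => ?_
      rw [key, smul_smul, ← key x y (α * a)]
      congr 1
      ring
    · -- hermitian symmetry
      intro x y
      refine uniq _ _ fun α => ?_
      have h1 : c (h x y) * α = c (h x y * c α) := by rw [map_mul, hc]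
      rw [key, h1, htrc, key, H α y x]
      exact qsymm _ _
    · -- nondegeneracy
      intro x hx
      refine qnd x fun y => ?_
      have := key x y 1
      rw [hx y, zero_mul, map_zero, one_smul] at this
      exact this.symm
    · intro x y
      have := key x y 1
      rw [mul_one, one_smul] at this
      exact this.symm
  · rintro ⟨h, ⟨hadd, hsmul, hherm, hnd⟩, htr⟩
    intro α x y
    rw [htr, htr]
    congr 1
    calc h (α • x) y = α * h x y := hsmul α x y
      _ = c (c α * h y x) := by rw [map_mul, hc, hherm x y, hc]
      _ = c (h (c α • y) x) := by rw [hsmul]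
      _ = h x (c α • y) := (hherm (c α • y) x).symm
end
end

section
/- Let E be a CM field of degree 20 whose discriminant Δ_E is a square in ℚ^×. Suppose that W is a one-dimensional nondegenerate hermitian form over E and V' is a nondegenerate quadratic form over ℚ such that T(W) ⊕ V' is isometric to V_K3. Then V' is isometric to the hyperbolic plane H. -/
noncomputable section

open scoped Classical TensorProduct

section AuxGeneral

open Module

lemma IsometricForms.symm' {k : Type*} [Field k] {V₁ V₂ : Type*} [AddCommGroup V₁] [Module k V₁]
    [AddCommGroup V₂] [Module k V₂] {B₁ : V₁ → V₁ → k} {B₂ : V₂ → V₂ → k}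
    (h : IsometricForms k B₁ B₂) : IsometricForms k B₂ B₁ := by
  obtain ⟨f, hf⟩ := h
  refine ⟨f.symm, fun x y => ?_⟩
  rw [← hf (f.symm x) (f.symm y)]
  simp

lemma DetRep.of_isometric {V₁ V₂ : Type*} [AddCommGroup V₁] [Module ℚ V₁] [AddCommGroup V₂]
    [Module ℚ V₂] {B₁ : V₁ → V₁ → ℚ} {B₂ : V₂ → V₂ → ℚ}
    (h : IsometricForms ℚ B₁ B₂) {a : ℚ} (hd : DetRep ℚ B₁ a) : DetRep ℚ B₂ a := by
  obtain ⟨f, hf⟩ := h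
  obtain ⟨n, b, cc, horth, hcc, hprod⟩ := hd
  refine ⟨n, b.map f, cc, fun i j hij => ?_, hcc, ?_⟩
  · simpa [Module.Basis.map_apply, hf] using horth i j hij
  · simpa [Module.Basis.map_apply, hf] using hprod

lemma DetRep.orthSum' {V₁ V₂ : Type*} [AddCommGroup V₁] [Module ℚ V₁] [AddCommGroup V₂]
    [Module ℚ V₂] {B₁ : V₁ → V₁ → ℚ} {B₂ : V₂ → V₂ → ℚ} {a₁ a₂ : ℚ}
    (hz₁ : ∀ x, B₁ x 0 = 0 ∧ B₁ 0 x = 0) (hz₂ : ∀ x, B₂ x 0 = 0 ∧ B₂ 0 x = 0)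
    (h₁ : DetRep ℚ B₁ a₁) (h₂ : DetRep ℚ B₂ a₂) : DetRep ℚ (orthSum B₁ B₂) (a₁ * a₂) := by
  obtain ⟨n, b, c, hb, hc, hp⟩ := h₁
  obtain ⟨m, b', c', hb', hc', hp'⟩ := h₂
  refine ⟨n + m, (b.prod b').reindex finSumFinEquiv, c * c', ?_, mul_ne_zero hc hc', ?_⟩
  · intro i j hij
    have hij' : (finSumFinEquiv.symm i) ≠ (finSumFinEquiv.symm j) := fun h => hij (by
      simpa using congrArg finSumFinEquiv h)
    simp only [Module.Basis.reindex_apply]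
    rcases hs : finSumFinEquiv.symm i with s | s <;> rcases ht : finSumFinEquiv.symm j with t | t <;>
      rw [hs, ht] at hij'
    · have hst : s ≠ t := fun h => hij' (by rw [h])
      simp [orthSum, Module.Basis.prod_apply, (hz₂ 0).1, hb s t hst]
    · simp [orthSum, Module.Basis.prod_apply, (hz₁ (b s)).1, (hz₂ (b' t)).2]
    · simp [orthSum, Module.Basis.prod_apply, (hz₁ (b t)).2, (hz₂ (b' s)).1]
    · have hst : s ≠ t := fun h => hij' (by rw [h])
      simp [orthSum, Module.Basis.prod_apply, (hz₁ 0).1, hb' s t hst]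
  · have step1 : (∏ i, orthSum B₁ B₂ (((b.prod b').reindex finSumFinEquiv) i)
        (((b.prod b').reindex finSumFinEquiv) i))
        = ∏ s, orthSum B₁ B₂ ((b.prod b') s) ((b.prod b') s) := by
      simp only [Module.Basis.reindex_apply]
      exact Fintype.prod_equiv finSumFinEquiv.symm _ _ (fun i => rfl)
    rw [step1, Fintype.prod_sum_type]
    have e1 : ∀ s : Fin n, orthSum B₁ B₂ ((b.prod b') (Sum.inl s)) ((b.prod b') (Sum.inl s))
        = B₁ (b s) (b s) := by
      intro s; simp [orthSum, Module.Basis.prod_apply, (hz₂ 0).1]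
    have e2 : ∀ s : Fin m, orthSum B₁ B₂ ((b.prod b') (Sum.inr s)) ((b.prod b') (Sum.inr s))
        = B₂ (b' s) (b' s) := by
      intro s; simp [orthSum, Module.Basis.prod_apply, (hz₁ 0).1]
    simp_rw [e1, e2]
    rw [hp, hp']
    ring

lemma gram_diag {V : Type*} [AddCommGroup V] [Module ℚ V] {n : ℕ}
    (B : V →ₗ[ℚ] V →ₗ[ℚ] ℚ) (b : Module.Basis (Fin n) ℚ V)
    (h : ∀ i j, i ≠ j → B (b i) (b j) = 0) :
    (LinearMap.toMatrix₂ b b B).det = ∏ i, B (b i) (b i) := by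
  have hd : LinearMap.toMatrix₂ b b B = Matrix.diagonal (fun i => B (b i) (b i)) := by
    ext i j
    rcases eq_or_ne i j with rfl | hij
    · simp [LinearMap.toMatrix₂_apply]
    · simp [LinearMap.toMatrix₂_apply, Matrix.diagonal_apply_ne _ hij, h i j hij]
  rw [hd, Matrix.det_diagonal]

lemma gram_change {V : Type*} [AddCommGroup V] [Module ℚ V] {n : ℕ}
    (B : V →ₗ[ℚ] V →ₗ[ℚ] ℚ) (b b' : Module.Basis (Fin n) ℚ V) :
    ∃ u : ℚ, u ≠ 0 ∧ (LinearMap.toMatrix₂ b' b' B).det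
      = u ^ 2 * (LinearMap.toMatrix₂ b b B).det := by
  refine ⟨(b.toMatrix b').det, ?_, ?_⟩
  · haveI := b.invertibleToMatrix b'
    exact IsUnit.ne_zero (Matrix.isUnit_det_of_invertible _)
  · rw [← LinearMap.toMatrix₂_mul_basis_toMatrix b b b' b' B, Matrix.det_mul, Matrix.det_mul,
      Matrix.det_transpose]
    ring

lemma detRep_lin {V : Type*} [AddCommGroup V] [Module ℚ V] (B : V →ₗ[ℚ] V →ₗ[ℚ] ℚ)
    {a : ℚ} {n : ℕ} (b : Module.Basis (Fin n) ℚ V)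
    (h : DetRep ℚ (fun x y => B x y) a) :
    ∃ u : ℚ, u ≠ 0 ∧ (LinearMap.toMatrix₂ b b B).det = a * u ^ 2 := by
  obtain ⟨m, b', c, hb', hc, hp⟩ := h
  have hmn : m = n := by
    have h1 := Module.finrank_eq_card_basis b
    have h2 := Module.finrank_eq_card_basis b'
    simp only [Fintype.card_fin] at h1 h2
    omega
  subst hmn
  obtain ⟨u, hu, hch⟩ := gram_change B b' b
  refine ⟨u * c, mul_ne_zero hu hc, ?_⟩
  rw [hch, gram_diag B b' hb', hp]
  ring

lemma detRep_of_lin {V : Type*} [AddCommGroup V] [Module ℚ V] [FiniteDimensional ℚ V]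
    (B : V →ₗ[ℚ] V →ₗ[ℚ] ℚ) (hs : LinearMap.IsSymm B)
    (b : Module.Basis (Fin (Module.finrank ℚ V)) ℚ V) :
    DetRep ℚ (fun x y => B x y) ((LinearMap.toMatrix₂ b b B).det) := by
  haveI : Invertible (2 : ℚ) := invertibleOfNonzero two_ne_zero
  obtain ⟨v, hv⟩ := LinearMap.BilinForm.exists_orthogonal_basis hs
  obtain ⟨u, hu, hch⟩ := gram_change B b v
  refine ⟨Module.finrank ℚ V, v, u, fun i j hij => hv hij, hu, ?_⟩
  rw [← gram_diag B v (fun i j hij => hv hij), hch]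
  ring

end AuxGeneral


section AuxVK3

@[simp] lemma hypForm_zero_left {k : Type*} [Field k] (y : k × k) : hypForm k 0 y = 0 := by
  simp [hypForm]

@[simp] lemma hypForm_zero_right {k : Type*} [Field k] (x : k × k) : hypForm k x 0 = 0 := by
  simp [hypForm]

@[simp] lemma diagForm_zero_left {k : Type*} [Field k] {n : ℕ} (d : Fin n → k)
    (y : Fin n → k) : diagForm k d 0 y = 0 := by simp [diagForm]

@[simp] lemma diagForm_zero_right {k : Type*} [Field k] {n : ℕ} (d : Fin n → k)
    (x : Fin n → k) : diagForm k d x 0 = 0 := by simp [diagForm]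

@[simp] lemma H3Form_zero_left (y : (ℚ × ℚ) × (ℚ × ℚ) × (ℚ × ℚ)) : H3Form 0 y = 0 := by
  simp [H3Form, orthSum]

@[simp] lemma H3Form_zero_right (x : (ℚ × ℚ) × (ℚ × ℚ) × (ℚ × ℚ)) : H3Form x 0 = 0 := by
  simp [H3Form, orthSum]

lemma hypForm_add_left {k : Type*} [Field k] (x x' y : k × k) :
    hypForm k (x + x') y = hypForm k x y + hypForm k x' y := by
  simp [hypForm]; ring

lemma hypForm_smul_left {k : Type*} [Field k] (a : k) (x y : k × k) :
    hypForm k (a • x) y = a * hypForm k x y := by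
  simp [hypForm]; ring

lemma hypForm_comm {k : Type*} [Field k] (x y : k × k) : hypForm k x y = hypForm k y x := by
  simp [hypForm]; ring

lemma diagForm_add_left {k : Type*} [Field k] {n : ℕ} (d : Fin n → k) (x x' y : Fin n → k) :
    diagForm k d (x + x') y = diagForm k d x y + diagForm k d x' y := by
  simp only [diagForm, Pi.add_apply]
  rw [← Finset.sum_add_distrib]
  exact Finset.sum_congr rfl fun i _ => by ring

lemma diagForm_smul_left {k : Type*} [Field k] {n : ℕ} (d : Fin n → k) (a : k) (x y : Fin n → k) :
    diagForm k d (a • x) y = a * diagForm k d x y := by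
  simp only [diagForm, Pi.smul_apply, smul_eq_mul, Finset.mul_sum]
  exact Finset.sum_congr rfl fun i _ => by ring

lemma diagForm_comm {k : Type*} [Field k] {n : ℕ} (d : Fin n → k) (x y : Fin n → k) :
    diagForm k d x y = diagForm k d y x := by
  simp only [diagForm]
  exact Finset.sum_congr rfl fun i _ => by ring

lemma H3Form_add_left (x x' y : (ℚ × ℚ) × (ℚ × ℚ) × (ℚ × ℚ)) :
    H3Form (x + x') y = H3Form x y + H3Form x' y := by
  simp only [H3Form, orthSum, Prod.fst_add, Prod.snd_add, hypForm_add_left]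
  ring

lemma H3Form_smul_left (a : ℚ) (x y : (ℚ × ℚ) × (ℚ × ℚ) × (ℚ × ℚ)) :
    H3Form (a • x) y = a * H3Form x y := by
  simp only [H3Form, orthSum, Prod.smul_fst, Prod.smul_snd, hypForm_smul_left]
  ring

lemma H3Form_comm (x y : (ℚ × ℚ) × (ℚ × ℚ) × (ℚ × ℚ)) : H3Form x y = H3Form y x := by
  simp only [H3Form, orthSum]
  rw [hypForm_comm, hypForm_comm x.2.1, hypForm_comm x.2.2]

lemma VK3Form_add_left (x x' y) : VK3Form (x + x') y = VK3Form x y + VK3Form x' y := by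
  simp only [VK3Form, orthSum, Prod.fst_add, Prod.snd_add, H3Form_add_left, diagForm_add_left]
  ring

lemma VK3Form_smul_left (a : ℚ) (x y) : VK3Form (a • x) y = a * VK3Form x y := by
  simp only [VK3Form, orthSum, Prod.smul_fst, Prod.smul_snd, H3Form_smul_left, diagForm_smul_left]
  ring

lemma VK3Form_comm (x y) : VK3Form x y = VK3Form y x := by
  simp only [VK3Form, orthSum]
  rw [H3Form_comm, diagForm_comm]

/-- `VK3Form` as a bilinear map. -/
def VK3Lin : (((ℚ × ℚ) × (ℚ × ℚ) × (ℚ × ℚ)) × (Fin 16 → ℚ)) →ₗ[ℚ]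
    (((ℚ × ℚ) × (ℚ × ℚ) × (ℚ × ℚ)) × (Fin 16 → ℚ)) →ₗ[ℚ] ℚ :=
  LinearMap.mk₂ ℚ VK3Form VK3Form_add_left
    (fun a x y => by rw [VK3Form_smul_left]; rfl)
    (fun x y z => by rw [VK3Form_comm, VK3Form_add_left, VK3Form_comm y, VK3Form_comm z])
    (fun a x y => by rw [VK3Form_comm, VK3Form_smul_left, VK3Form_comm]; rfl)

@[simp] lemma VK3Lin_apply (x y) : VK3Lin x y = VK3Form x y := rfl

/-- The orthogonalizing equivalence of the hyperbolic plane. -/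
def hypDiagEquiv : (ℚ × ℚ) ≃ₗ[ℚ] (ℚ × ℚ) where
  toFun p := (p.1 + p.2, p.1 - p.2)
  map_add' p q := by ext <;> simp <;> ring
  map_smul' a p := by ext <;> simp <;> ring
  invFun p := ((p.1 + p.2) / 2, (p.1 - p.2) / 2)
  left_inv p := by ext <;> simp <;> ring
  right_inv p := by ext <;> simp <;> ring

def hBasis : Module.Basis (Fin 2) ℚ (ℚ × ℚ) := (Module.Basis.finTwoProd ℚ).map hypDiagEquiv

lemma hBasis_zero : hBasis 0 = ((1 : ℚ), (1 : ℚ)) := by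
  simp [hBasis, Module.Basis.map_apply, hypDiagEquiv]

lemma hBasis_one : hBasis 1 = ((1 : ℚ), (-1 : ℚ)) := by
  simp [hBasis, Module.Basis.map_apply, hypDiagEquiv]

lemma hyp_hBasis (i j : Fin 2) :
    hypForm ℚ (hBasis i) (hBasis j) = if i = j then (if i = 0 then 2 else -2) else 0 := by
  fin_cases i <;> fin_cases j <;>
    simp [hBasis_zero, hBasis_one, hypForm] <;> norm_num

abbrev vkIndex : Type := (Fin 2 ⊕ (Fin 2 ⊕ Fin 2)) ⊕ Fin 16

def vkBasis : Module.Basis vkIndex ℚ (((ℚ × ℚ) × (ℚ × ℚ) × (ℚ × ℚ)) × (Fin 16 → ℚ)) :=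
  (hBasis.prod (hBasis.prod hBasis)).prod (Pi.basisFun ℚ (Fin 16))

lemma diagPi_eval (i j : Fin 16) :
    diagForm ℚ (fun _ => (-1 : ℚ)) (Pi.single i 1) (Pi.single j 1)
    = if i = j then -1 else 0 := by
  simp only [diagForm]
  rcases eq_or_ne i j with rfl | hij
  · simp [Pi.single_apply]
  · rw [if_neg hij]
    apply Finset.sum_eq_zero
    intro k _
    rcases eq_or_ne k i with rfl | hki
    · simp [Pi.single_eq_of_ne hij]
    · simp [Pi.single_eq_of_ne hki]

/-- The diagonalizing basis for `H³`. -/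
def H3B : Module.Basis (Fin 2 ⊕ (Fin 2 ⊕ Fin 2)) ℚ ((ℚ × ℚ) × (ℚ × ℚ) × (ℚ × ℚ)) :=
  hBasis.prod (hBasis.prod hBasis)

lemma H3B_inl (i : Fin 2) : H3B (Sum.inl i) = (hBasis i, 0, 0) :=
  Prod.ext (Module.Basis.prod_apply_inl_fst _ _ _) (Module.Basis.prod_apply_inl_snd _ _ _)

lemma H3B_inrl (i : Fin 2) : H3B (Sum.inr (Sum.inl i)) = (0, hBasis i, 0) := by
  refine Prod.ext (Module.Basis.prod_apply_inr_fst _ _ _) ?_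
  rw [show (H3B (Sum.inr (Sum.inl i))).2 = (hBasis.prod hBasis) (Sum.inl i) from
    Module.Basis.prod_apply_inr_snd _ _ _]
  exact Prod.ext (Module.Basis.prod_apply_inl_fst _ _ _) (Module.Basis.prod_apply_inl_snd _ _ _)

lemma H3B_inrr (i : Fin 2) : H3B (Sum.inr (Sum.inr i)) = (0, 0, hBasis i) := by
  refine Prod.ext (Module.Basis.prod_apply_inr_fst _ _ _) ?_
  rw [show (H3B (Sum.inr (Sum.inr i))).2 = (hBasis.prod hBasis) (Sum.inr i) from
    Module.Basis.prod_apply_inr_snd _ _ _]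
  exact Prod.ext (Module.Basis.prod_apply_inr_fst _ _ _) (Module.Basis.prod_apply_inr_snd _ _ _)

lemma H3Form_explicit (x y : (ℚ × ℚ) × (ℚ × ℚ) × (ℚ × ℚ)) :
    H3Form x y = hypForm ℚ x.1 y.1 + (hypForm ℚ x.2.1 y.2.1 + hypForm ℚ x.2.2 y.2.2) := rfl

lemma h3_orth (a b : Fin 2 ⊕ (Fin 2 ⊕ Fin 2)) (hab : a ≠ b) : H3Form (H3B a) (H3B b) = 0 := by
  rcases a with i | (i | i) <;> rcases b with j | (j | j) <;>
    simp only [H3B_inl, H3B_inrl, H3B_inrr, H3Form_explicit, hypForm_zero_left,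
      hypForm_zero_right, add_zero, zero_add] <;>
  · rw [hyp_hBasis]
    have hij : i ≠ j := fun h => hab (by rw [h])
    simp [hij]

lemma h3_diag (a : Fin 2 ⊕ (Fin 2 ⊕ Fin 2)) :
    H3Form (H3B a) (H3B a) = Sum.elim (fun i : Fin 2 => if i = 0 then (2:ℚ) else -2)
      (Sum.elim (fun i : Fin 2 => if i = 0 then (2:ℚ) else -2)
        (fun i : Fin 2 => if i = 0 then (2:ℚ) else -2)) a := by
  rcases a with i | (i | i) <;>
    simp only [H3B_inl, H3B_inrl, H3B_inrr, H3Form_explicit, hypForm_zero_left,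
      hypForm_zero_right, add_zero, zero_add, Sum.elim_inl, Sum.elim_inr] <;>
  · rw [hyp_hBasis]
    simp

lemma vkBasis_inl (a : Fin 2 ⊕ (Fin 2 ⊕ Fin 2)) : vkBasis (Sum.inl a) = (H3B a, 0) :=
  Prod.ext (Module.Basis.prod_apply_inl_fst _ _ _) (Module.Basis.prod_apply_inl_snd _ _ _)

lemma vkBasis_inr (k : Fin 16) : vkBasis (Sum.inr k) = (0, Pi.basisFun ℚ (Fin 16) k) :=
  Prod.ext (Module.Basis.prod_apply_inr_fst _ _ _) (Module.Basis.prod_apply_inr_snd _ _ _)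

lemma VK3Form_explicit (x y : ((ℚ × ℚ) × (ℚ × ℚ) × (ℚ × ℚ)) × (Fin 16 → ℚ)) :
    VK3Form x y = H3Form x.1 y.1 + diagForm ℚ (fun _ => (-1:ℚ)) x.2 y.2 := rfl

lemma vk_orth (s t : vkIndex) (hst : s ≠ t) : VK3Form (vkBasis s) (vkBasis t) = 0 := by
  rcases s with a | k <;> rcases t with b | l
  · have hab : a ≠ b := fun h => hst (by rw [h])
    rw [vkBasis_inl, vkBasis_inl, VK3Form_explicit]
    simp [h3_orth a b hab]
  · rw [vkBasis_inl, vkBasis_inr, VK3Form_explicit]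
    simp
  · rw [vkBasis_inr, vkBasis_inl, VK3Form_explicit]
    simp
  · have hkl : k ≠ l := fun h => hst (by rw [h])
    rw [vkBasis_inr, vkBasis_inr, VK3Form_explicit]
    simp [diagPi_eval, hkl]

lemma vk_diag_prod : (∏ s : vkIndex, VK3Form (vkBasis s) (vkBasis s)) = -64 := by
  rw [Fintype.prod_sum_type]
  have h1 : (∏ a : Fin 2 ⊕ (Fin 2 ⊕ Fin 2), VK3Form (vkBasis (Sum.inl a)) (vkBasis (Sum.inl a)))
      = -64 := by
    have e : ∀ a, VK3Form (vkBasis (Sum.inl a)) (vkBasis (Sum.inl a)) = H3Form (H3B a) (H3B a) := by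
      intro a
      rw [vkBasis_inl, VK3Form_explicit]
      simp
    simp_rw [e, h3_diag]
    rw [Fintype.prod_sum_type, Fintype.prod_sum_type]
    simp [Fin.prod_univ_two]
    norm_num
  have h2 : (∏ k : Fin 16, VK3Form (vkBasis (Sum.inr k)) (vkBasis (Sum.inr k))) = 1 := by
    have e : ∀ k, VK3Form (vkBasis (Sum.inr k)) (vkBasis (Sum.inr k)) = -1 := by
      intro k
      rw [vkBasis_inr, VK3Form_explicit]
      simp [diagPi_eval]
    simp_rw [e]
    norm_num
  rw [h1, h2]
  norm_num

lemma detRep_VK3 : DetRep ℚ VK3Form (-1) := by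
  have hcard : Fintype.card vkIndex = 22 := by simp
  refine ⟨22, vkBasis.reindex (Fintype.equivFinOfCardEq hcard), 8, ?_, by norm_num, ?_⟩
  · intro i j hij
    simp only [Module.Basis.reindex_apply]
    apply vk_orth
    intro h
    exact hij (by simpa using congrArg (Fintype.equivFinOfCardEq hcard) h)
  · have he : (∏ i : Fin 22, VK3Form (vkBasis ((Fintype.equivFinOfCardEq hcard).symm i))
        (vkBasis ((Fintype.equivFinOfCardEq hcard).symm i)))
        = ∏ s : vkIndex, VK3Form (vkBasis s) (vkBasis s) :=
      Fintype.prod_equiv (Fintype.equivFinOfCardEq hcard).symm _ _ (fun i => rfl)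
    simp only [Module.Basis.reindex_apply]
    rw [he, vk_diag_prod]
    norm_num

end AuxVK3


section AuxE

open Module

/-- Multiplication by a fixed element, as a `ℚ`-linear endomorphism. -/
def mulLin {E : Type*} [Field E] [Algebra ℚ E] (β : E) : E →ₗ[ℚ] E where
  toFun x := β * x
  map_add' a b := mul_add β a b
  map_smul' q a := mul_smul_comm q β a

@[simp] lemma mulLin_apply {E : Type*} [Field E] [Algebra ℚ E] (β x : E) :
    mulLin β x = β * x := rfl

lemma det_restrict_isCompl {M : Type*} [AddCommGroup M] [Module ℚ M] [FiniteDimensional ℚ M]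
    {p q : Submodule ℚ M} (h : IsCompl p q) (f : M →ₗ[ℚ] M)
    (hp : ∀ x ∈ p, f x ∈ p) (hq : ∀ x ∈ q, f x ∈ q) :
    LinearMap.det f = LinearMap.det (f.restrict hp) * LinearMap.det (f.restrict hq) := by
  classical
  have key : ∀ z : ↥p × ↥q, f (Submodule.prodEquivOfIsCompl p q h z)
      = Submodule.prodEquivOfIsCompl p q h (((f.restrict hp).prodMap (f.restrict hq)) z) := by
    intro z
    simp only [Submodule.coe_prodEquivOfIsCompl', LinearMap.prodMap_apply,
      LinearMap.restrict_coe_apply, map_add]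
  have hfe : f = ↑(Submodule.prodEquivOfIsCompl p q h)
      ∘ₗ ((f.restrict hp).prodMap (f.restrict hq))
      ∘ₗ ↑((Submodule.prodEquivOfIsCompl p q h).symm) := by
    apply LinearMap.ext
    intro x
    have hx := key ((Submodule.prodEquivOfIsCompl p q h).symm x)
    rw [LinearEquiv.apply_symm_apply] at hx
    simpa using hx
  conv_lhs => rw [hfe]
  rw [LinearMap.det_conj]
  let bp := Module.finBasis ℚ p
  let bq := Module.finBasis ℚ q
  rw [← LinearMap.det_toMatrix (bp.prod bq), LinearMap.toMatrix_prodMap,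
    Matrix.det_fromBlocks_zero₂₁, LinearMap.det_toMatrix, LinearMap.det_toMatrix]

lemma detRep_transfer {E : Type*} [Field E] [NumberField E] (c : E ≃+* E)
    (hCM : IsCMWithConj E c) (hd : Module.finrank ℚ E = 20)
    (hsq : ∃ t : ℚ, (NumberField.discr E : ℚ) = t ^ 2)
    {W : Type*} [AddCommGroup W] [Module ℚ W] [Module E W] [IsScalarTower ℚ E W]
    (hW1 : Module.finrank E W = 1)
    (Q : W → W → E) (hQ : IsHermitianForm c Q) :
    ∃ q : ℚ, q ≠ 0 ∧ DetRep ℚ (transfer E Q) (q ^ 2) := by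
  classical
  -- `c` fixes `ℚ`
  have hqc : ∀ x : ℚ, c (algebraMap ℚ E x) = algebraMap ℚ E x := by
    intro x
    have : (c : E →+* E).comp (algebraMap ℚ E) = algebraMap ℚ E := Subsingleton.elim _ _
    exact RingHom.congr_fun this x
  set σ : E ≃ₐ[ℚ] E := AlgEquiv.ofRingEquiv hqc with hσ
  have hσc : ∀ x : E, σ x = c x := fun _ => rfl
  -- `c` is an involution
  haveI : Algebra.IsAlgebraic ℚ E := Algebra.IsAlgebraic.of_finite ℚ E
  have hc2 : ∀ x : E, c (c x) = x := by
    intro x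
    have φ : E →ₐ[ℚ] ℂ := IsAlgClosed.lift
    have hinj : Function.Injective (φ.toRingHom : E →+* ℂ) := φ.toRingHom.injective
    apply hinj
    rw [hCM.2 φ.toRingHom (c x), hCM.2 φ.toRingHom x]
    exact Complex.conj_conj _
  -- the element δ with c δ = -δ
  obtain ⟨x₀, hx₀⟩ : ∃ x : E, c x ≠ x := by
    by_contra h
    push_neg at h
    exact hCM.1 (RingEquiv.ext h)
  set δ : E := x₀ - c x₀ with hδdef
  have hδ0 : δ ≠ 0 := sub_ne_zero.mpr (Ne.symm hx₀)
  have hcδ : c δ = -δ := by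
    rw [hδdef, map_sub, hc2, neg_sub]
  -- the hermitian scalar α
  haveI : FiniteDimensional E W := FiniteDimensional.of_finrank_pos (by rw [hW1]; norm_num)
  set bW : Module.Basis (Fin 1) E W := Module.finBasisOfFinrankEq E W hW1 with hbW
  set w : W := bW 0 with hw
  set gE : W ≃ₗ[E] E := bW.equivFun.trans (LinearEquiv.funUnique (Fin 1) E E) with hgE
  have hrep : ∀ x : W, x = gE x • w := by
    intro x
    have h1 : gE x = bW.repr x 0 := rfl
    have h2 := bW.sum_repr x
    rw [Fin.sum_univ_one] at h2
    rw [h1, hw]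
    exact h2.symm
  set α : E := Q w w with hα'
  have hcα : c α = α := (hQ.2.2.1 w w).symm
  have hα0 : α ≠ 0 := by
    intro h0
    have hw0 : w = 0 := by
      apply hQ.2.2.2 w
      intro y
      rw [hrep y]
      have h1 : Q (gE y • w) w = gE y * α := by rw [hQ.2.1]
      rw [show Q w (gE y • w) = c (Q (gE y • w) w) from hQ.2.2.1 _ _, h1, h0, mul_zero, map_zero]
    exact Module.Basis.ne_zero bW 0 (by rw [← hw]; exact hw0)
  -- eigenspace decomposition for c
  set cL : E →ₗ[ℚ] E := σ.toLinearMap with hcL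
  have hcLa : ∀ x, cL x = c x := fun x => rfl
  set P : Submodule ℚ E := LinearMap.ker (cL - LinearMap.id) with hP
  set N : Submodule ℚ E := LinearMap.ker (cL + LinearMap.id) with hN
  have hmemP : ∀ x : E, x ∈ P ↔ c x = x := by
    intro x
    rw [hP, LinearMap.mem_ker, LinearMap.sub_apply, LinearMap.id_apply, sub_eq_zero, hcLa]
  have hmemN : ∀ x : E, x ∈ N ↔ c x = -x := by
    intro x
    rw [hN, LinearMap.mem_ker, LinearMap.add_apply, LinearMap.id_apply,
      add_eq_zero_iff_eq_neg, hcLa]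
  have hPN : IsCompl P N := by
    refine ⟨Submodule.disjoint_def.mpr fun x hxP hxN => ?_, codisjoint_iff.mpr ?_⟩
    · have h1 : c x = x := (hmemP x).1 hxP
      have h2 : c x = -x := (hmemN x).1 hxN
      have h3 : x = -x := h1.symm.trans h2
      have h4 : x + x = 0 := by nth_rewrite 2 [h3]; exact add_neg_cancel x
      have h5 : (2 : E) * x = 0 := by rw [two_mul, h4]
      exact (mul_eq_zero.mp h5).resolve_left two_ne_zero
    · rw [eq_top_iff]
      rintro x -
      have h2 : (2 : E) ≠ 0 := two_ne_zero
      refine Submodule.mem_sup.mpr ⟨(2:E)⁻¹ * (x + c x), ?_, (2:E)⁻¹ * (x - c x), ?_, ?_⟩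
      · rw [hmemP, map_mul, map_inv₀, map_ofNat, map_add, hc2]; ring
      · rw [hmemN, map_mul, map_inv₀, map_ofNat, map_sub, hc2]; ring
      · rw [← mul_add, show (x + c x) + (x - c x) = 2 * x from by ring,
          inv_mul_cancel_left₀ h2]
  set L : E →ₗ[ℚ] E := (mulLin α).comp cL with hL
  have hLa : ∀ x, L x = α * c x := fun x => rfl
  have hLP : ∀ x ∈ P, L x ∈ P := by
    intro x hx; rw [hmemP] at hx ⊢; rw [hLa, map_mul, hcα, hc2, hx]
  have hLN : ∀ x ∈ N, L x ∈ N := by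
    intro x hx; rw [hmemN] at hx ⊢; rw [hLa, map_mul, hcα, hc2, hx]; ring
  have hMP : ∀ x ∈ P, (mulLin α) x ∈ P := by
    intro x hx; rw [hmemP] at hx ⊢; rw [mulLin_apply, map_mul, hcα, hx]
  have hMN : ∀ x ∈ N, (mulLin α) x ∈ N := by
    intro x hx; rw [hmemN] at hx ⊢; rw [mulLin_apply, map_mul, hcα, hx, mul_neg]
  have hDP : ∀ x ∈ P, (mulLin δ) x ∈ N := by
    intro x hx; rw [hmemP] at hx; rw [hmemN, mulLin_apply, map_mul, hcδ, hx, neg_mul]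
  have hDN : ∀ y ∈ N, (mulLin δ⁻¹) y ∈ P := by
    intro y hy; rw [hmemN] at hy
    rw [hmemP, mulLin_apply, map_mul, map_inv₀, hcδ, hy, inv_neg]
    ring
  set D : ↥P ≃ₗ[ℚ] ↥N := LinearEquiv.ofLinear ((mulLin δ).restrict hDP)
      ((mulLin δ⁻¹).restrict hDN)
      (by
        apply LinearMap.ext; intro y; apply Subtype.ext
        simp only [LinearMap.comp_apply, LinearMap.restrict_coe_apply, mulLin_apply,
          LinearMap.id_apply]
        exact mul_inv_cancel_left₀ hδ0 _)
      (by
        apply LinearMap.ext; intro x; apply Subtype.ext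
        simp only [LinearMap.comp_apply, LinearMap.restrict_coe_apply, mulLin_apply,
          LinearMap.id_apply]
        exact inv_mul_cancel_left₀ hδ0 _) with hD
  have hdetL : LinearMap.det L
      = LinearMap.det (L.restrict hLP) * LinearMap.det (L.restrict hLN) :=
    det_restrict_isCompl hPN L hLP hLN
  have hLp_eq : L.restrict hLP = (mulLin α).restrict hMP := by
    apply LinearMap.ext; intro x; apply Subtype.ext
    rw [LinearMap.restrict_coe_apply, LinearMap.restrict_coe_apply, hLa, mulLin_apply,
      (hmemP _).1 x.2]
  have hLn_eq : L.restrict hLN = -((mulLin α).restrict hMN) := by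
    apply LinearMap.ext; intro x; apply Subtype.ext
    rw [LinearMap.restrict_coe_apply, LinearMap.neg_apply]
    have : ((-(((mulLin α).restrict hMN) x) : ↥N) : E) = -((((mulLin α).restrict hMN) x : ↥N) : E) := rfl
    rw [this, LinearMap.restrict_coe_apply, mulLin_apply, hLa, (hmemN _).1 x.2]
    ring
  set dP : ℚ := LinearMap.det ((mulLin α).restrict hMP) with hdP
  have hconj : (mulLin α).restrict hMN = ↑D ∘ₗ ((mulLin α).restrict hMP) ∘ₗ ↑(D.symm) := by
    apply LinearMap.ext; intro y; apply Subtype.ext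
    show α * (y : E) = δ * (α * (δ⁻¹ * (y : E)))
    field_simp
  have hdetn : LinearMap.det ((mulLin α).restrict hMN) = dP := by
    rw [hconj, LinearMap.det_conj]
  have hrkN : Module.finrank ℚ ↥N = 10 := by
    have h1 := Submodule.finrank_add_eq_of_isCompl hPN
    rw [hd] at h1
    have h2 : Module.finrank ℚ ↥P = Module.finrank ℚ ↥N := D.finrank_eq
    omega
  have hdetL2 : LinearMap.det L = dP ^ 2 := by
    rw [hdetL, hLp_eq, hLn_eq,
      show -((mulLin α).restrict hMN) = (-1 : ℚ) • ((mulLin α).restrict hMN) from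
        (neg_one_smul ℚ ((mulLin α).restrict hMN)).symm,
      LinearMap.det_smul, hdetn, hrkN]
    ring
  set mulEq : E ≃ₗ[ℚ] E := LinearEquiv.ofLinear (mulLin α) (mulLin α⁻¹)
    (by
      apply LinearMap.ext; intro x
      simp only [LinearMap.comp_apply, mulLin_apply, LinearMap.id_apply]
      exact mul_inv_cancel_left₀ hα0 x)
    (by
      apply LinearMap.ext; intro x
      simp only [LinearMap.comp_apply, mulLin_apply, LinearMap.id_apply]
      exact inv_mul_cancel_left₀ hα0 x) with hmulEq
  set Le : E ≃ₗ[ℚ] E := σ.toLinearEquiv.trans mulEq with hLe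
  have hLeL : (Le : E →ₗ[ℚ] E) = L := by
    apply LinearMap.ext; intro x
    rfl
  have hdetL0 : LinearMap.det L ≠ 0 := by
    rw [← hLeL]
    exact IsUnit.ne_zero (LinearEquiv.isUnit_det' Le)
  have hdP0 : dP ≠ 0 := by
    intro h
    rw [hdetL2, h] at hdetL0
    simp at hdetL0
  -- the Gram determinant of the transfer form
  set b20 : Module.Basis (Fin (Module.finrank ℚ E)) ℚ E := (NumberField.integralBasis E).reindex
    (Fintype.equivFinOfCardEq (Module.finrank_eq_card_basis (NumberField.integralBasis E)).symm)
    with hb20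
  set BilE : E →ₗ[ℚ] E →ₗ[ℚ] ℚ := (Algebra.traceForm ℚ E).compl₂ L with hBilE
  have hBilEa : ∀ x y, BilE x y = Algebra.trace ℚ E (x * (α * c y)) := by
    intro x y
    rw [hBilE]
    simp only [LinearMap.compl₂_apply, Algebra.traceForm_apply]
    rfl
  have hGram : (LinearMap.toMatrix₂ b20 b20 BilE).det
      = (NumberField.discr E : ℚ) * LinearMap.det L := by
    rw [hBilE, LinearMap.toMatrix₂_compl₂ b20 b20 b20, Matrix.det_mul, LinearMap.det_toMatrix]
    congr 1
    have htm : LinearMap.toMatrix₂ b20 b20 (Algebra.traceForm ℚ E)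
        = Algebra.traceMatrix ℚ ⇑b20 := by
      ext i j
      rw [LinearMap.toMatrix₂_apply, Algebra.traceMatrix_apply]
    rw [htm, ← Algebra.discr_def, hb20, Module.Basis.coe_reindex, Algebra.discr_reindex]
    exact (NumberField.coe_discr E).symm
  obtain ⟨t, ht⟩ := hsq
  have ht0 : t ≠ 0 := by
    intro h
    rw [h] at ht
    norm_num at ht
    exact NumberField.discr_ne_zero E (by exact_mod_cast ht)
  have hsymmE : LinearMap.IsSymm BilE := by
    refine ⟨fun x y => ?_⟩
    rw [RingHom.id_apply, hBilEa, hBilEa]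
    have htr := Algebra.trace_eq_of_algEquiv σ (x * (α * c y))
    rw [show σ (x * (α * c y)) = y * (α * c x) from by
      rw [hσc _, map_mul, map_mul, hcα, hc2]; ring] at htr
    exact htr.symm
  have hDetBil := detRep_of_lin BilE hsymmE b20
  rw [hGram, hdetL2, ht] at hDetBil
  -- transport to the transfer form
  set g : W ≃ₗ[ℚ] E := gE.restrictScalars ℚ with hg
  have hQval : ∀ x y : W, Q x y = gE x * (c (gE y) * α) := by
    intro x y
    conv_lhs => rw [hrep x, hrep y]
    rw [hQ.2.1, show Q w (gE y • w) = c (Q (gE y • w) w) from hQ.2.2.1 _ _, hQ.2.1,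
      map_mul, hcα]
  have hiso2 : IsometricForms ℚ (transfer E Q) (fun x y => BilE x y) := by
    refine ⟨g, fun x y => ?_⟩
    show BilE (g x) (g y) = transfer E Q x y
    have hgx : (g : W → E) = (gE : W → E) := rfl
    rw [hBilEa]
    show Algebra.trace ℚ E (gE x * (α * c (gE y))) = Algebra.trace ℚ E (Q x y)
    rw [hQval]
    congr 1
    ring
  refine ⟨t * dP, mul_ne_zero ht0 hdP0, ?_⟩
  rw [show (t * dP) ^ 2 = t ^ 2 * dP ^ 2 from by ring]
  exact DetRep.of_isometric (IsometricForms.symm' hiso2) hDetBil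

end AuxE

set_option maxHeartbeats 2000000 in
/-- Proposition `m = Delta = 1`. -/
theorem statement_8
    {E : Type*} [Field E] [NumberField E] (c : E ≃+* E) (hCM : IsCMWithConj E c)
    (hd : Module.finrank ℚ E = 20)
    (hsq : ∃ t : ℚ, (NumberField.discr E : ℚ) = t ^ 2)
    {W : Type*} [AddCommGroup W] [Module ℚ W] [Module E W] [IsScalarTower ℚ E W]
    (hW1 : Module.finrank E W = 1)
    (Q : W → W → E) (hQ : IsHermitianForm c Q)
    {V' : Type*} [AddCommGroup V'] [Module ℚ V'] (BV' : V' → V' → ℚ)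
    (hBV' : IsSymmQF ℚ BV')
    (hiso : IsometricForms ℚ (orthSum (transfer E Q) BV') VK3Form) :
    IsometricForms ℚ BV' (hypForm ℚ) := by
  classical
  haveI : FiniteDimensional E W := FiniteDimensional.of_finrank_pos (by rw [hW1]; norm_num)
  haveI : FiniteDimensional ℚ W := Module.Finite.trans E W
  obtain ⟨f, hf⟩ := hiso
  haveI : FiniteDimensional ℚ (W × V') := LinearEquiv.finiteDimensional f.symm
  haveI : FiniteDimensional ℚ V' :=
    Module.Finite.of_surjective (LinearMap.snd ℚ W V') Prod.snd_surjective
  have hWrank : Module.finrank ℚ W = 20 := by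
    have h := Module.finrank_mul_finrank ℚ E W
    rw [hd, hW1] at h
    simpa using h.symm
  have hV2 : Module.finrank ℚ V' = 2 := by
    have h1 : Module.finrank ℚ (W × V') = 22 := by
      rw [f.finrank_eq]
      simp [Module.finrank_prod]
    rw [Module.finrank_prod, hWrank] at h1
    omega
  have hadd := hBV'.1
  have hsmul := hBV'.2.1
  have hsymm := hBV'.2.2.1
  have hnd := hBV'.2.2.2
  set BVlin : V' →ₗ[ℚ] V' →ₗ[ℚ] ℚ := LinearMap.mk₂ ℚ BV' hadd
    (fun a x y => by rw [hsmul]; rfl)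
    (fun x y z => by rw [hsymm, hadd, hsymm y, hsymm z])
    (fun a x y => by rw [hsymm, hsmul, hsymm]; rfl) with hBVlin
  haveI : Invertible (2 : ℚ) := invertibleOfNonzero two_ne_zero
  have hsymmlin : LinearMap.IsSymm BVlin := LinearMap.isSymm_def.mpr fun x y => by
    rw [RingHom.id_apply]
    exact hsymm x y
  obtain ⟨v0, hv0⟩ := LinearMap.BilinForm.exists_orthogonal_basis hsymmlin
  set v : Module.Basis (Fin 2) ℚ V' := v0.reindex (finCongr hV2) with hv
  have hvorth : ∀ i j : Fin 2, i ≠ j → BV' (v i) (v j) = 0 := by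
    intro i j hij
    rw [hv]
    simp only [Module.Basis.reindex_apply]
    exact hv0 (fun h => hij (by simpa using congrArg (finCongr hV2) h))
  set d0 := BV' (v 0) (v 0) with hd0
  set d1 := BV' (v 1) (v 1) with hd1
  have hdetV : DetRep ℚ BV' (d0 * d1) := by
    refine ⟨2, v, 1, hvorth, one_ne_zero, ?_⟩
    rw [Fin.prod_univ_two, ← hd0, ← hd1]
    ring
  have hBV0 : ∀ x : V', BV' 0 x = 0 := by
    intro x
    have h := hadd 0 0 x
    rw [add_zero] at h
    exact (right_eq_add.mp h)
  have hzV : ∀ x : V', BV' x 0 = 0 ∧ BV' 0 x = 0 := fun x =>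
    ⟨by rw [hsymm]; exact hBV0 x, hBV0 x⟩
  have hQ0 : ∀ y : W, Q 0 y = 0 := by
    intro y
    have h := hQ.1 0 0 y
    rw [add_zero] at h
    exact (right_eq_add.mp h)
  have hzT : ∀ x : W, transfer E Q x 0 = 0 ∧ transfer E Q 0 x = 0 := by
    intro x
    constructor
    · have hx0 : Q x 0 = 0 := by
        rw [hQ.2.2.1 0 x, hQ0, map_zero]
      simp [transfer, hx0]
    · simp [transfer, hQ0 x]
  obtain ⟨q, hq0, hdetT⟩ := detRep_transfer c hCM hd hsq hW1 Q hQ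
  have hdetSum := DetRep.orthSum' hzT hzV hdetT hdetV
  have hdetVK : DetRep ℚ VK3Form (q ^ 2 * (d0 * d1)) := DetRep.of_isometric ⟨f, hf⟩ hdetSum
  have hcard22 : Fintype.card vkIndex = 22 := by simp
  set b22 := vkBasis.reindex (Fintype.equivFinOfCardEq hcard22) with hb22
  obtain ⟨u, hu0, hu⟩ := detRep_lin VK3Lin b22 hdetVK
  obtain ⟨u', hu0', hu'⟩ := detRep_lin VK3Lin b22 detRep_VK3
  have hkey : q ^ 2 * (d0 * d1) * u ^ 2 = -1 * u' ^ 2 := by rw [← hu, ← hu']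
  set s : ℚ := u' / (q * u) with hs
  have hs0 : s ≠ 0 := div_ne_zero hu0' (mul_ne_zero hq0 hu0)
  have hds : d0 * d1 = -s ^ 2 := by
    rw [hs]
    field_simp
    linear_combination hkey
  have hd00 : d0 ≠ 0 := by
    intro h
    have hv00 : (v 0 : V') = 0 := by
      apply hnd
      intro y
      have hy := v.sum_repr y
      rw [Fin.sum_univ_two] at hy
      rw [← hy]
      have hr : BV' (v 0) ((v.repr y 0) • v 0 + (v.repr y 1) • v 1)
          = (v.repr y 0) * BV' (v 0) (v 0) + (v.repr y 1) * BV' (v 1) (v 0) := by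
        rw [hsymm, hadd, hsmul, hsmul, hsymm (v 0) (v 0)]
      rw [hr, hvorth 1 0 (by decide), ← hd0, h]
      ring
    exact v.ne_zero 0 hv00
  have hd1v : d1 = -s ^ 2 / d0 := by
    field_simp
    linear_combination hds
  set t' : ℚ := d0 / s with ht'
  have ht'0 : t' ≠ 0 := div_ne_zero hd00 hs0
  set k : ℚ := (2 * d0)⁻¹ with hk
  have hk0 : k ≠ 0 := inv_ne_zero (mul_ne_zero two_ne_zero hd00)
  set A : (ℚ × ℚ) →ₗ[ℚ] V' :=
    ((LinearMap.fst ℚ ℚ ℚ + k • LinearMap.snd ℚ ℚ ℚ).smulRight (v 0))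
      + ((t' • LinearMap.fst ℚ ℚ ℚ - (t' * k) • LinearMap.snd ℚ ℚ ℚ).smulRight (v 1))
    with hA'
  have hA : ∀ p : ℚ × ℚ, A p = (p.1 + k * p.2) • v 0 + (t' * p.1 - t' * k * p.2) • v 1 := by
    intro p
    rw [hA']
    simp [LinearMap.smulRight_apply, LinearMap.add_apply, LinearMap.sub_apply,
      LinearMap.smul_apply, smul_eq_mul]
  have hexp : ∀ a b a' b' : ℚ, BV' (a • v 0 + b • v 1) (a' • v 0 + b' • v 1)
      = a * a' * d0 + b * b' * d1 := by
    intro a b a' b'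
    rw [hadd, hsmul, hsmul]
    have e0 : BV' (v 0) (a' • v 0 + b' • v 1) = a' * d0 := by
      rw [hsymm, hadd, hsmul, hsmul, hvorth 1 0 (by decide), ← hd0]
      ring
    have e1 : BV' (v 1) (a' • v 0 + b' • v 1) = b' * d1 := by
      rw [hsymm, hadd, hsmul, hsmul, hvorth 0 1 (by decide), ← hd1]
      ring
    rw [e0, e1]
    ring
  have hmain : ∀ p p' : ℚ × ℚ, BV' (A p) (A p') = hypForm ℚ p p' := by
    intro p p'
    rw [hA, hA, hexp]
    show _ = p.1 * p'.2 + p.2 * p'.1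
    rw [hd1v, ht', hk]
    field_simp
    ring
  have hker : ∀ p : ℚ × ℚ, A p = 0 → p = 0 := by
    intro p hp
    rw [hA] at hp
    have h0 := congrArg (fun z => (v.repr z) 0) hp
    have h1 := congrArg (fun z => (v.repr z) 1) hp
    simp only [map_add, map_smul, Module.Basis.repr_self, Finsupp.smul_single, smul_eq_mul, mul_one,
      Finsupp.coe_add, Pi.add_apply, Finsupp.single_apply, map_zero, Finsupp.coe_zero,
      Pi.zero_apply] at h0 h1
    norm_num at h0 h1
    have h1' : p.1 - k * p.2 = 0 := by
      apply mul_left_cancel₀ ht'0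
      rw [mul_zero]
      linarith [h1]
    have hp1 : p.1 = 0 := by linarith [h0, h1']
    have hp2 : p.2 = 0 := by
      have : k * p.2 = 0 := by linarith [h0, hp1]
      exact (mul_eq_zero.mp this).resolve_left hk0
    exact Prod.ext hp1 hp2
  have hAinj : Function.Injective A := by
    intro x y hxy
    have h : A (x - y) = 0 := by rw [map_sub, hxy, sub_self]
    exact sub_eq_zero.mp (hker _ h)
  have hAsurj : Function.Surjective A := by
    have hfr : Module.finrank ℚ (ℚ × ℚ) = Module.finrank ℚ V' := by
      rw [hV2, Module.finrank_prod, Module.finrank_self]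
    exact (LinearMap.injective_iff_surjective_of_finrank_eq_finrank hfr).mp hAinj
  set F : (ℚ × ℚ) ≃ₗ[ℚ] V' := LinearEquiv.ofBijective A ⟨hAinj, hAsurj⟩ with hF
  refine ⟨F.symm, fun x y => ?_⟩
  have hFx : A (F.symm x) = x := F.apply_symm_apply x
  have hFy : A (F.symm y) = y := F.apply_symm_apply y
  calc hypForm ℚ (F.symm x) (F.symm y)
      = BV' (A (F.symm x)) (A (F.symm y)) := (hmain _ _).symm
    _ = BV' x y := by rw [hFx, hFy]
end
end
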